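/- Let κ_1, ..., κ_p be random variables such that {κ_j : j ∈ H_0} are i.i.d. uniform on {0,1,...,M} and independent of everything else. Fix an integer v ≥ 1 with 1 - (M/(M+1))^v ≤ α. Let T be any stopping rule such that the set R = {j ≤ T : κ_j = 0} contains at most the null indices with κ_j = 0 occurring before the v-th null index j with κ_j ≠ 0 (in the fixed ordering 1,...,p). Then P(|R ∩ H_0| ≥ 1) ≤ α. -/

import Mathlib

open MeasureTheory ENNReal ProbabilityTheory

/-- FWER control of the knockoff FWER filter: if the null `κ_j`'s are i.i.d. uniform on
`{0,…,M}`, `v ≥ 1` satisfies `1 - (M/(M+1))^v ≤ α`, and the rejection set `R` contains only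
indices `j` with `κ_j = 0` which are preceded (in the fixed ordering) by strictly fewer than `v`
null indices with nonzero `κ`, then `P(|R ∩ H₀| ≥ 1) ≤ α`. -/
theorem knockoff_filter_fwer_control {Ω : Type*} [MeasurableSpace Ω] (μ : Measure Ω)
    [IsProbabilityMeasure μ] (p M v : ℕ) (hM : 1 ≤ M) (hv : 1 ≤ v)
    (α : ℝ≥0∞) (hα : 1 - ((M : ℝ≥0∞) / ((M : ℝ≥0∞) + 1)) ^ v ≤ α)
    (κ : Fin p → Ω → Fin (M + 1)) (hκmeas : ∀ j, Measurable (κ j))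
    (H0 : Finset (Fin p))
    -- the null `κ_j`'s are independent ...
    (hIndep : iIndepFun
      (fun j : {j : Fin p // j ∈ H0} => κ j) μ)
    -- ... and uniform on `{0,…,M}`, independent of the non-null `κ_j`'s
    (hUnif : ∀ j ∈ H0, ∀ m : Fin (M + 1), μ {ω | κ j ω = m} = 1 / ((M : ℝ≥0∞) + 1))
    (hIndepRest : IndepFun (fun ω => fun j : {j : Fin p // j ∈ H0} => κ j ω)
      (fun ω => fun j : {j : Fin p // j ∉ H0} => κ j ω) μ)
    (R : Ω → Finset (Fin p))
    -- `R` only contains indices with `κ_j = 0`, and any null index in `R` is preceded by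
    -- strictly fewer than `v` null indices with nonzero `κ`
    (hR : ∀ ω, ∀ j ∈ R ω, j ∈ H0 →
      κ j ω = 0 ∧ ((H0.filter fun i => i < j ∧ κ i ω ≠ 0).card < v)) :
    μ {ω | 1 ≤ (R ω ∩ H0).card} ≤ α := by
  classical
  set l : List (Fin p) := H0.sort (· ≤ ·) with hl
  set S : Finset (Fin p) := (l.take v).toFinset with hS
  have hlmem : ∀ i, i ∈ l ↔ i ∈ H0 := fun i => Finset.mem_sort _
  have hSsub : S ⊆ H0 := by
    intro i hi
    exact (hlmem i).1 (List.mem_of_mem_take (List.mem_toFinset.1 hi))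
  have hnd : l.Nodup := H0.sort_nodup _
  have hScard : S.card ≤ v := by
    calc S.card ≤ (l.take v).length := (l.take v).toFinset_card_le
      _ ≤ v := List.length_take_le _ _
  -- the event A: all κ's in S are nonzero
  set A : Set Ω := ⋂ j ∈ S, {ω | κ j ω ≠ 0} with hA
  have hAmeas : MeasurableSet A := by
    refine MeasurableSet.biInter S.countable_toSet fun j _ => ?_
    exact (hκmeas j (measurableSet_singleton 0)).compl
  -- inclusion
  have hsub : {ω | 1 ≤ (R ω ∩ H0).card} ⊆ Aᶜ := by
    intro ω hω hωA
    simp only [hA, Set.mem_iInter, Set.mem_setOf_eq] at hωA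
    obtain ⟨j, hj⟩ := Finset.card_pos.1 hω
    obtain ⟨hjR, hjH0⟩ := Finset.mem_inter.1 hj
    obtain ⟨hκ0, hcard⟩ := hR ω j hjR hjH0
    have hjS : j ∉ S := fun h => hωA j h hκ0
    -- j is in the dropped part
    have hjl : j ∈ l := (hlmem j).2 hjH0
    have hjdrop : j ∈ l.drop v := by
      have htd : l.take v ++ l.drop v = l := List.take_append_drop v l
      rcases List.mem_append.1 (htd ▸ hjl) with h | h
      · exact absurd (List.mem_toFinset.2 h) hjS
      · exact h
    have hvlen : v < l.length := by
      by_contra h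
      push_neg at h
      rw [List.drop_eq_nil_of_le h] at hjdrop
      exact List.not_mem_nil hjdrop
    have hScard' : S.card = v := by
      rw [hS, List.toFinset_card_of_nodup (hnd.sublist (List.take_sublist _ _)),
        List.length_take]
      exact Nat.min_eq_left hvlen.le
    -- every element of S is < j
    have hlt : ∀ i ∈ S, i < j := by
      intro i hi
      have hil : i ∈ l.take v := List.mem_toFinset.1 hi
      have hle : i ≤ j := by
        have hsorted : (l.take v ++ l.drop v).Pairwise (· ≤ ·) := by
          rw [List.take_append_drop]; exact H0.pairwise_sort _
        exact (List.pairwise_append.1 hsorted).2.2 i hil j hjdrop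
      rcases lt_or_eq_of_le hle with h | h
      · exact h
      · exact absurd (h ▸ hi) hjS
    have hSsub' : S ⊆ H0.filter fun i => i < j ∧ κ i ω ≠ 0 := by
      intro i hi
      exact Finset.mem_filter.2 ⟨hSsub hi, hlt i hi, hωA i hi⟩
    have := Finset.card_le_card hSsub'
    omega
  -- measure of A
  have hprob : ∀ j ∈ H0, μ {ω | κ j ω ≠ 0} = (M : ℝ≥0∞) / ((M : ℝ≥0∞) + 1) := by
    intro j hj
    have h0 : {ω | κ j ω ≠ 0} = {ω | κ j ω = 0}ᶜ := by ext ω; simp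
    have hm : MeasurableSet {ω | κ j ω = (0 : Fin (M+1))} :=
      hκmeas j (measurableSet_singleton 0)
    rw [h0, prob_compl_eq_one_sub hm, hUnif j hj 0]
    have hne : ((M : ℝ≥0∞) + 1) ≠ 0 := by simp
    have hnetop : ((M : ℝ≥0∞) + 1) ≠ ∞ := by simp
    refine (ENNReal.sub_eq_of_eq_add (by simp [ENNReal.div_eq_top]) ?_).symm.symm
    rw [ENNReal.div_add_div_same, ENNReal.div_self hne hnetop]
  have hAcalc : μ A = ((M : ℝ≥0∞) / ((M : ℝ≥0∞) + 1)) ^ S.card := by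
    have hrw : A = ⋂ j ∈ S.subtype (· ∈ H0), {ω | κ j.1 ω ≠ 0} := by
      ext ω
      simp only [hA, Set.mem_iInter, Set.mem_setOf_eq]
      constructor
      · intro h j hj
        exact h j.1 (Finset.mem_subtype.1 hj)
      · intro h i hi
        exact h ⟨i, hSsub hi⟩ (Finset.mem_subtype.2 hi)
    rw [hrw, hIndep.meas_biInter (fun j _ => ?_), Finset.prod_congr rfl
      (fun j _ => hprob j.1 j.2)]
    · rw [Finset.prod_const]
      congr 1
      rw [Finset.card_subtype, Finset.filter_true_of_mem fun i hi => hSsub hi]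
    · exact ⟨({0}ᶜ : Set (Fin (M+1))), (measurableSet_singleton 0).compl, rfl⟩
  have hfinal : μ {ω | 1 ≤ (R ω ∩ H0).card} ≤ 1 - μ A := by
    calc μ {ω | 1 ≤ (R ω ∩ H0).card} ≤ μ Aᶜ := measure_mono hsub
      _ = 1 - μ A := prob_compl_eq_one_sub hAmeas
  refine hfinal.trans (le_trans ?_ hα)
  rw [hAcalc]
  refine tsub_le_tsub_left ?_ 1
  refine pow_le_pow_of_le_one zero_le ?_ hScard
  exact ENNReal.div_le_of_le_mul (by simp)
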